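/- For n > 1, if v is an element of A_n = ⟨x_1^2,…,x_n^2⟩ ≤ G_n that commutes with both x_1 and x_2, then v = 1. Concretely: if v = (x_1^2)^{a_1}⋯(x_n^2)^{a_n} with integer exponents, and x_1 v x_1^{-1} = v and x_2 v x_2^{-1} = v, then all a_i = 0. -/
import Mathlib


/-- The relations of the combinatorial Hantzsche-Wendt group:
`xᵢ⁻¹ xⱼ² xᵢ xⱼ²` for all `i ≠ j`. -/
def HWrels (n : ℕ) : Set (FreeGroup (Fin n)) :=
  {r | ∃ i j : Fin n, i ≠ j ∧
    r = (FreeGroup.of i)⁻¹ * (FreeGroup.of j) ^ 2 * FreeGroup.of i * (FreeGroup.of j) ^ 2}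

/-- The combinatorial Hantzsche-Wendt group `Gₙ`. -/
abbrev HW (n : ℕ) : Type := PresentedGroup (HWrels n)

/-- The generators `x₁, …, xₙ` of `Gₙ`. -/
def HWx (n : ℕ) (i : Fin n) : HW n := PresentedGroup.of i

/-- An infinite-dihedral-type group `ℤ ⋊ ℤˣ`. -/
@[ext] structure Dih where
  t : ℤ
  s : ℤˣ

namespace Dih

instance : Mul Dih := ⟨fun a b => ⟨a.t + (a.s : ℤ) * b.t, a.s * b.s⟩⟩
instance : One Dih := ⟨⟨0, 1⟩⟩
instance : Inv Dih := ⟨fun a => ⟨-((a.s⁻¹ : ℤˣ) : ℤ) * a.t, a.s⁻¹⟩⟩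

lemma mul_t (a b : Dih) : (a * b).t = a.t + (a.s : ℤ) * b.t := rfl
lemma mul_s (a b : Dih) : (a * b).s = a.s * b.s := rfl
lemma one_t : (1 : Dih).t = 0 := rfl
lemma one_s : (1 : Dih).s = 1 := rfl
lemma inv_t (a : Dih) : (a⁻¹).t = -((a.s⁻¹ : ℤˣ) : ℤ) * a.t := rfl
lemma inv_s (a : Dih) : (a⁻¹).s = a.s⁻¹ := rfl

instance : Group Dih where
  mul_assoc a b c := by
    ext
    · simp only [mul_t, mul_s]; push_cast; ring
    · simp only [mul_s, mul_assoc]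
  one_mul a := by
    ext
    · simp [mul_t, one_t, one_s]
    · simp [mul_s, one_s]
  mul_one a := by
    ext
    · simp [mul_t, one_t]
    · simp [mul_s, one_s]
  inv_mul_cancel a := by
    ext
    · simp only [mul_t, inv_t, inv_s, one_t]; ring
    · simp [mul_s, inv_s, one_s]

lemma t_pow (c : ℤ) (m : ℕ) : (Dih.mk c 1) ^ m = Dih.mk ((m : ℤ) * c) 1 := by
  induction m with
  | zero => ext <;> simp [one_t, one_s]
  | succ k ih =>
    rw [pow_succ, ih]
    ext
    · simp only [mul_t]; push_cast; ring
    · simp [mul_s]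

lemma t_zpow (c m : ℤ) : (Dih.mk c 1) ^ m = Dih.mk (m * c) 1 := by
  cases m with
  | ofNat k => simpa using t_pow c k
  | negSucc k =>
    rw [zpow_negSucc, t_pow]
    ext
    · simp only [inv_t, inv_s]
      simp [Int.negSucc_eq]
      ring
    · simp [inv_s]

lemma list_prod (l : List ℤ) :
    (l.map fun c => Dih.mk c 1).prod = Dih.mk l.sum 1 := by
  induction l with
  | nil => ext <;> simp [one_t, one_s]
  | cons h tl ih =>
    rw [List.map_cons, List.prod_cons, ih]
    ext
    · simp [mul_t]
    · simp [mul_s]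

end Dih

lemma HW_key (n : ℕ) (a : Fin n → ℤ) (v : HW n)
    (hv : v = (List.ofFn fun i : Fin n => ((HWx n i) ^ 2) ^ (a i)).prod)
    (m k : Fin n) (hmk : m ≠ k)
    (h : HWx n m * v * (HWx n m)⁻¹ = v) : a k = 0 := by
  classical
  set f : Fin n → Dih := fun i => if i = k then Dih.mk 1 1 else Dih.mk 0 (-1)
    with hf
  have hsq : ∀ j : Fin n, (f j) ^ 2 = Dih.mk (if j = k then (2 : ℤ) else 0) 1 := by
    intro j
    by_cases hj : j = k <;>
    · simp only [hf, hj, if_pos, if_neg, ite_true, ite_false, sq]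
      ext
      · simp [Dih.mul_t, hj]
      · simp [Dih.mul_s, hj]
  have hrel : ∀ r ∈ HWrels n, FreeGroup.lift f r = 1 := by
    rintro r ⟨i, j, hij, rfl⟩
    simp only [map_mul, map_inv, map_pow, FreeGroup.lift_apply_of]
    rw [hsq]
    by_cases hj : j = k
    · subst hj
      have hi : ¬ i = j := hij
      simp only [if_pos rfl, hf, if_neg hi, ite_false]
      ext
      · simp [Dih.mul_t, Dih.inv_t, Dih.inv_s, Dih.mul_s, Dih.one_t]
      · simp [Dih.mul_s, Dih.inv_s, Dih.one_s]
    · simp only [if_neg hj]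
      have h0 : Dih.mk (0 : ℤ) 1 = 1 := rfl
      rw [h0, mul_one, mul_one, inv_mul_cancel]
  set φ : HW n →* Dih := PresentedGroup.toGroup hrel with hφ
  have hx : ∀ i : Fin n, φ (HWx n i) = f i := fun i => PresentedGroup.toGroup.of hrel
  have hterm : ∀ i : Fin n, φ (((HWx n i) ^ 2) ^ (a i)) =
      Dih.mk (if i = k then 2 * a k else 0 : ℤ) 1 := by
    intro i
    rw [map_zpow, map_pow, hx, hsq]
    by_cases hi : i = k
    · subst hi
      rw [if_pos rfl, if_pos rfl, Dih.t_zpow]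
      congr 1
      ring
    · rw [if_neg hi, if_neg hi, Dih.t_zpow, mul_zero]
  have hφv : φ v = Dih.mk (2 * a k) 1 := by
    have hmap : (List.ofFn fun i : Fin n => ((HWx n i) ^ 2) ^ (a i)).map φ =
        (List.ofFn fun i : Fin n => (if i = k then 2 * a k else 0 : ℤ)).map
          (fun c => Dih.mk c 1) := by
      rw [List.map_ofFn, List.map_ofFn]
      congr 1
      funext i
      exact hterm i
    rw [hv, map_list_prod, hmap, Dih.list_prod, List.sum_ofFn]
    congr 1
    simp
  have hc := congrArg φ h
  rw [map_mul, map_mul, map_inv, hx, hφv] at hc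
  have hm : f m = Dih.mk 0 (-1) := by simp [hf, hmk]
  rw [hm] at hc
  have h1 := congrArg Dih.t hc
  simp [Dih.mul_t, Dih.inv_t, Dih.inv_s, Dih.mul_s] at h1
  omega

/-- For `n > 1`: if `v = (x₁²)^{a₁} ⋯ (xₙ²)^{aₙ} ∈ Aₙ` commutes with `x₁` and `x₂`,
then all exponents `aᵢ` vanish (so `v = 1`). -/
theorem central_in_A_trivial (n : ℕ) (hn : 1 < n) (a : Fin n → ℤ) (v : HW n)
    (hv : v = (List.ofFn fun i : Fin n => ((HWx n i) ^ 2) ^ (a i)).prod)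
    (h1 : HWx n ⟨0, by omega⟩ * v * (HWx n ⟨0, by omega⟩)⁻¹ = v)
    (h2 : HWx n ⟨1, by omega⟩ * v * (HWx n ⟨1, by omega⟩)⁻¹ = v) :
    ∀ i, a i = 0 := by
  intro k
  by_cases hk : k = ⟨0, by omega⟩
  · exact HW_key n a v hv ⟨1, by omega⟩ k (by rw [hk]; simp [Fin.ext_iff]) h2
  · exact HW_key n a v hv ⟨0, by omega⟩ k (fun h => hk h.symm) h1
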